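/- There is an infinite computable binary tree T ⊆ 2^{<ℕ} such that for every e, there is a bound t with the property: if the e-th computably enumerable set W_e has at least e+3 elements, then W_e is not homogeneous for any string in T of length greater than t. In particular, no infinite c.e. set is homogeneous for a path through T. -/

import Mathlib

/-- The initial segment of length `n` of an infinite binary sequence `p`. -/
def initSeg (p : ℕ → Bool) (n : ℕ) : List Bool := (List.range n).map p

/-- A tree of finite binary strings: a set closed under initial segments. -/
def IsTree (T : Set (List Bool)) : Prop := ∀ σ ∈ T, ∀ τ : List Bool, τ <+: σ → τ ∈ T

/-- `H` is homogeneous for the string `σ` with color `c`. -/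
def HomogFor (H : Set ℕ) (c : Bool) (σ : List Bool) : Prop :=
  ∀ x ∈ H, x < σ.length → σ.getD x false = c

/-- `H` is homogeneous (with color `c`) for arbitrarily long strings of `T`. -/
def HomogPathC (H : Set ℕ) (c : Bool) (T : Set (List Bool)) : Prop :=
  ∀ t : ℕ, ∃ σ ∈ T, t ≤ σ.length ∧ HomogFor H c σ
/-- The `e`-th partial computable function `Φ_e`. -/
def Phi (e : ℕ) : ℕ →. ℕ := (Denumerable.ofNat Nat.Partrec.Code e).eval

/-- `W_e`, the domain of the `e`-th partial computable function. -/
def WSet (e : ℕ) : Set ℕ := {x | (Phi e x).Dom}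



open Nat.Partrec.Code

/-- `Φ_e(x)` halts within `s` steps. -/
def haltB (e x s : ℕ) : Bool :=
  (Nat.Partrec.Code.evaln s (Denumerable.ofNat Nat.Partrec.Code e) x).isSome

/-- Bounded universal quantifier, as a fold. -/
def allB (n : ℕ) (p : ℕ → Bool) : Bool := (List.range n).foldr (fun x b => p x && b) true

/-- Bounded existential quantifier, as a fold. -/
def exB (n : ℕ) (p : ℕ → Bool) : Bool := (List.range n).foldr (fun x b => p x || b) false

/-- Bounded counting, as a fold. -/
def cntB (n : ℕ) (p : ℕ → Bool) : ℕ :=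
  (List.range n).foldr (fun x c => cond (p x) (c + 1) c) 0

/-- Jockusch's tree. -/
def TJ (σ : List Bool) : Bool :=
  allB σ.length fun e =>
    allB (σ.length + 1) fun m =>
      !(decide (e + 3 ≤ cntB m fun x => haltB e x m)) ||
        exB m fun x => haltB e x m &&
          exB m fun y => haltB e y m && (σ.getD x false != σ.getD y false)

/-- stage-`m` approximation to `W_e`. -/
def Aset (e m : ℕ) : Finset ℕ := (Finset.range m).filter fun x => haltB e x m = true

lemma allB_iff {n p} : allB n p = true ↔ ∀ x < n, p x = true := by
  have : ∀ l : List ℕ, (l.foldr (fun x b => p x && b) true = true) ↔ ∀ x ∈ l, p x = true := by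
    intro l; induction l with
    | nil => simp
    | cons a l ih => simp [ih]
  simpa [allB, this] using Iff.rfl

lemma exB_iff {n p} : exB n p = true ↔ ∃ x < n, p x = true := by
  have : ∀ l : List ℕ, (l.foldr (fun x b => p x || b) false = true) ↔ ∃ x ∈ l, p x = true := by
    intro l; induction l with
    | nil => simp
    | cons a l ih => simp [ih]
  simpa [exB, this] using Iff.rfl

lemma cntB_eq {n p} : cntB n p = ((Finset.range n).filter fun x => p x = true).card := by
  have haux : ∀ (l : List ℕ) (c : ℕ),
      l.foldr (fun x c => cond (p x) (c + 1) c) c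
        = l.foldr (fun x c => cond (p x) (c + 1) c) 0 + c := by
    intro l
    induction l with
    | nil => simp
    | cons a l ihl =>
      intro c
      simp only [List.foldr_cons]
      cases h : p a
      · simp [ihl c]
      · simp only [cond_true]
        rw [ihl c, ihl 0]
        omega
  induction n with
  | zero => simp [cntB]
  | succ n ih =>
    have hstep : cntB (n + 1) p = cntB n p + cond (p n) 1 0 := by
      simp only [cntB, List.range_succ, List.foldr_append, List.foldr_cons, List.foldr_nil]
      cases h : p n
      · simp
      · simp only [cond_true]
        rw [haux]
    rw [hstep, ih, Finset.range_add_one, Finset.filter_insert]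
    cases h : p n <;> simp [h, Finset.card_insert_of_notMem]


lemma haltB_mono {e x s s'} (h : s ≤ s') (hx : haltB e x s = true) : haltB e x s' = true := by
  simp only [haltB, Option.isSome_iff_exists] at hx ⊢
  obtain ⟨y, hy⟩ := hx
  exact ⟨y, Nat.Partrec.Code.evaln_mono h hy⟩

lemma haltB_lt {e x s} (h : haltB e x s = true) : x < s := by
  simp only [haltB, Option.isSome_iff_exists] at h
  obtain ⟨y, hy⟩ := h
  exact Nat.Partrec.Code.evaln_bound hy

lemma mem_Aset_iff {e m x} : x ∈ Aset e m ↔ haltB e x m = true := by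
  constructor
  · intro h; exact (Finset.mem_filter.1 h).2
  · intro h; exact Finset.mem_filter.2 ⟨Finset.mem_range.2 (haltB_lt h), h⟩

lemma Aset_mono {e m m'} (h : m ≤ m') : Aset e m ⊆ Aset e m' := by
  intro x hx
  exact mem_Aset_iff.2 (haltB_mono h (mem_Aset_iff.1 hx))

lemma Aset_lt {e m x} (hx : x ∈ Aset e m) : x < m := haltB_lt (mem_Aset_iff.1 hx)

lemma Aset_sub_W {e m} : ∀ x ∈ Aset e m, x ∈ WSet e := by
  intro x hx
  have h := mem_Aset_iff.1 hx
  simp only [haltB, Option.isSome_iff_exists] at h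
  obtain ⟨y, hy⟩ := h
  have : y ∈ (Denumerable.ofNat Nat.Partrec.Code e).eval x :=
    Nat.Partrec.Code.evaln_sound hy
  exact Part.dom_iff_mem.2 ⟨y, this⟩

lemma mem_W_exists_Aset {e x} (h : x ∈ WSet e) : ∃ m, x ∈ Aset e m := by
  obtain ⟨y, hy⟩ := Part.dom_iff_mem.1 h
  obtain ⟨k, hk⟩ := Nat.Partrec.Code.evaln_complete.1 hy
  refine ⟨k, mem_Aset_iff.2 ?_⟩
  simp only [haltB, Option.isSome_iff_exists]
  exact ⟨y, hk⟩

lemma TJ_iff {σ : List Bool} : TJ σ = true ↔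
    ∀ e < σ.length, ∀ m ≤ σ.length, e + 3 ≤ (Aset e m).card →
      ∃ x ∈ Aset e m, ∃ y ∈ Aset e m, σ.getD x false ≠ σ.getD y false := by
  have hc : ∀ e m, cntB m (fun x => haltB e x m) = (Aset e m).card := by
    intro e m; rw [cntB_eq]; rfl
  constructor
  · intro h e he m hm hcard
    have h1 := allB_iff.1 h e he
    have h2 := allB_iff.1 h1 m (Nat.lt_succ_of_le hm)
    rw [Bool.or_eq_true, Bool.not_eq_true', decide_eq_false_iff_not] at h2
    rcases h2 with h2 | h2
    · exact absurd hcard (by rwa [hc] at h2)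
    · obtain ⟨x, hx, hx2⟩ := exB_iff.1 h2
      rw [Bool.and_eq_true] at hx2
      obtain ⟨y, hy, hy2⟩ := exB_iff.1 hx2.2
      rw [Bool.and_eq_true, bne_iff_ne] at hy2
      exact ⟨x, mem_Aset_iff.2 hx2.1, y, mem_Aset_iff.2 hy2.1, hy2.2⟩
  · intro h
    rw [TJ, allB_iff]
    intro e he
    rw [allB_iff]
    intro m hm
    rw [Bool.or_eq_true, Bool.not_eq_true', decide_eq_false_iff_not]
    by_cases hcard : e + 3 ≤ (Aset e m).card
    · right
      obtain ⟨x, hx, y, hy, hxy⟩ := h e he m (Nat.lt_succ_iff.1 hm) hcard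
      rw [exB_iff]
      refine ⟨x, Aset_lt hx, ?_⟩
      rw [Bool.and_eq_true]
      refine ⟨mem_Aset_iff.1 hx, ?_⟩
      rw [exB_iff]
      refine ⟨y, Aset_lt hy, ?_⟩
      rw [Bool.and_eq_true, bne_iff_ne]
      exact ⟨mem_Aset_iff.1 hy, hxy⟩
    · left; rwa [hc]

section PrimrecStuff
open Primrec

lemma haltB_primrec {α} [Primcodable α] {g h k : α → ℕ}
    (hg : Primrec g) (hh : Primrec h) (hk : Primrec k) :
    Primrec fun a => haltB (g a) (h a) (k a) :=
  option_isSome.comp <|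
    Nat.Partrec.Code.primrec_evaln.comp <|
      (hk.pair ((Primrec.ofNat Nat.Partrec.Code).comp hg)).pair hh

lemma allB_primrec {α} [Primcodable α] {f : α → ℕ} {p : α → ℕ → Bool}
    (hf : Primrec f) (hp : Primrec₂ p) : Primrec fun a => allB (f a) (p a) := by
  have hh : Primrec₂ fun (a : α) (q : ℕ × Bool) => p a q.1 && q.2 :=
    (dom_bool₂ (· && ·)).comp (hp.comp fst (fst.comp snd)) (snd.comp snd)
  exact (list_foldr (list_range.comp hf) (const true) hh).of_eq fun a => rfl

lemma exB_primrec {α} [Primcodable α] {f : α → ℕ} {p : α → ℕ → Bool}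
    (hf : Primrec f) (hp : Primrec₂ p) : Primrec fun a => exB (f a) (p a) := by
  have hh : Primrec₂ fun (a : α) (q : ℕ × Bool) => p a q.1 || q.2 :=
    (dom_bool₂ (· || ·)).comp (hp.comp fst (fst.comp snd)) (snd.comp snd)
  exact (list_foldr (list_range.comp hf) (const false) hh).of_eq fun a => rfl

lemma cntB_primrec {α} [Primcodable α] {f : α → ℕ} {p : α → ℕ → Bool}
    (hf : Primrec f) (hp : Primrec₂ p) : Primrec fun a => cntB (f a) (p a) := by
  have hh : Primrec₂ fun (a : α) (q : ℕ × ℕ) => cond (p a q.1) (q.2 + 1) q.2 :=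
    Primrec.cond (hp.comp fst (fst.comp snd)) (succ.comp (snd.comp snd)) (snd.comp snd)
  exact (list_foldr (list_range.comp hf) (const 0) hh).of_eq fun a => rfl

lemma TJ_computable : Computable TJ := by
  -- innermost: over α₄ = (((List Bool × ℕ) × ℕ) × ℕ) × ℕ  (σ, e, m, x, y)
  have h4 : Primrec fun (w : (((List Bool × ℕ) × ℕ) × ℕ) × ℕ) =>
      haltB w.1.1.1.2 w.2 w.1.1.2 &&
        (w.1.1.1.1.getD w.1.2 false != w.1.1.1.1.getD w.2 false) := by
    have hhalt : Primrec fun (w : (((List Bool × ℕ) × ℕ) × ℕ) × ℕ) =>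
        haltB w.1.1.1.2 w.2 w.1.1.2 :=
      haltB_primrec (snd.comp (fst.comp (fst.comp fst))) snd (snd.comp (fst.comp fst))
    have hσ : Primrec fun (w : (((List Bool × ℕ) × ℕ) × ℕ) × ℕ) => w.1.1.1.1 :=
      fst.comp (fst.comp (fst.comp fst))
    have hbne : Primrec fun (w : (((List Bool × ℕ) × ℕ) × ℕ) × ℕ) =>
        (w.1.1.1.1.getD w.1.2 false != w.1.1.1.1.getD w.2 false) :=
      (dom_bool₂ (· != ·)).comp ((list_getD false).comp hσ (snd.comp fst))
        ((list_getD false).comp hσ snd)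
    exact (dom_bool₂ (· && ·)).comp hhalt hbne
  -- level 3: over α₃ = ((List Bool × ℕ) × ℕ) × ℕ  (σ, e, m, x)
  have h3 : Primrec fun (w : ((List Bool × ℕ) × ℕ) × ℕ) =>
      haltB w.1.1.2 w.2 w.1.2 &&
        exB w.1.2 (fun y => haltB w.1.1.2 y w.1.2 &&
          (w.1.1.1.getD w.2 false != w.1.1.1.getD y false)) := by
    have hhalt : Primrec fun (w : ((List Bool × ℕ) × ℕ) × ℕ) => haltB w.1.1.2 w.2 w.1.2 :=
      haltB_primrec (snd.comp (fst.comp fst)) snd (snd.comp fst)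
    have hex : Primrec fun (w : ((List Bool × ℕ) × ℕ) × ℕ) =>
        exB w.1.2 (fun y => haltB w.1.1.2 y w.1.2 &&
          (w.1.1.1.getD w.2 false != w.1.1.1.getD y false)) :=
      exB_primrec (snd.comp fst) h4
    exact (dom_bool₂ (· && ·)).comp hhalt hex
  -- level 2: over α₂ = (List Bool × ℕ) × ℕ  (σ, e, m)
  have h2 : Primrec fun (w : (List Bool × ℕ) × ℕ) =>
      (!(decide (w.1.2 + 3 ≤ cntB w.2 fun x => haltB w.1.2 x w.2)) ||
        exB w.2 fun x => haltB w.1.2 x w.2 &&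
          exB w.2 fun y => haltB w.1.2 y w.2 &&
            (w.1.1.getD x false != w.1.1.getD y false)) := by
    have hcnt : Primrec fun (w : (List Bool × ℕ) × ℕ) =>
        cntB w.2 fun x => haltB w.1.2 x w.2 :=
      cntB_primrec snd (haltB_primrec (snd.comp (fst.comp fst)) snd (snd.comp fst))
    have hle : Primrec fun (w : (List Bool × ℕ) × ℕ) =>
        decide (w.1.2 + 3 ≤ cntB w.2 fun x => haltB w.1.2 x w.2) :=
      (PrimrecRel.comp nat_le (nat_add.comp (snd.comp fst) (const 3)) hcnt).decide
    have hnot : Primrec fun (w : (List Bool × ℕ) × ℕ) =>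
        !(decide (w.1.2 + 3 ≤ cntB w.2 fun x => haltB w.1.2 x w.2)) :=
      (dom_bool (!·)).comp hle
    have hex : Primrec fun (w : (List Bool × ℕ) × ℕ) =>
        exB w.2 fun x => haltB w.1.2 x w.2 &&
          exB w.2 fun y => haltB w.1.2 y w.2 &&
            (w.1.1.getD x false != w.1.1.getD y false) :=
      exB_primrec snd h3
    exact (dom_bool₂ (· || ·)).comp hnot hex
  -- level 1: over α₁ = List Bool × ℕ  (σ, e)
  have h1 : Primrec fun (w : List Bool × ℕ) =>
      allB (w.1.length + 1) fun m =>
        !(decide (w.2 + 3 ≤ cntB m fun x => haltB w.2 x m)) ||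
          exB m fun x => haltB w.2 x m &&
            exB m fun y => haltB w.2 y m &&
              (w.1.getD x false != w.1.getD y false) :=
    allB_primrec (succ.comp (list_length.comp fst)) h2
  have h0 : Primrec TJ := allB_primrec list_length h1
  exact h0.to_comp
end PrimrecStuff

lemma TJ_tree : ∀ σ, TJ σ = true → ∀ τ : List Bool, τ <+: σ → TJ τ = true := by
  intro σ hσ τ hpre
  obtain ⟨ρ, rfl⟩ := hpre
  have hlen : τ.length ≤ (τ ++ ρ).length := by simp
  have hgd : ∀ k, k < τ.length → (τ ++ ρ).getD k false = τ.getD k false := by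
    intro k hk
    simp [List.getD_eq_getElem?_getD, List.getElem?_append_left hk]
  rw [TJ_iff] at hσ ⊢
  intro e he m hm hcard
  obtain ⟨x, hx, y, hy, hxy⟩ := hσ e (lt_of_lt_of_le he hlen) m (le_trans hm hlen) hcard
  refine ⟨x, hx, y, hy, ?_⟩
  rw [← hgd x (lt_of_lt_of_le (Aset_lt hx) hm), ← hgd y (lt_of_lt_of_le (Aset_lt hy) hm)]
  exact hxy

lemma card_constOn {n : ℕ} (D : Finset (Fin n)) (c : Bool) :
    (Finset.univ.filter fun p : Fin n → Bool => ∀ i ∈ D, p i = c).card = 2 ^ (n - D.card) := by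
  classical
  rw [← Fintype.card_subtype]
  have E : {p : Fin n → Bool // ∀ i ∈ D, p i = c} ≃ ((Dᶜ : Finset (Fin n)) → Bool) :=
    { toFun := fun p i => p.1 i.1
      invFun := fun g =>
        ⟨fun i => if h : i ∈ D then c else g ⟨i, by simp [h]⟩, fun i hi => by simp [hi]⟩
      left_inv := fun p => by
        apply Subtype.ext
        funext i
        by_cases h : i ∈ D
        · simp [h, p.2 i h]
        · simp [h]
      right_inv := fun g => by
        funext i
        have hi : (i : Fin n) ∉ D := Finset.mem_compl.1 i.2
        simp [hi] }
  rw [Fintype.card_congr E, Fintype.card_fun, Fintype.card_coe, Finset.card_compl,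
    Fintype.card_fin, Fintype.card_bool]

lemma sum_two_pow (m : ℕ) : ∑ j ∈ Finset.range m, 2 ^ j = 2 ^ m - 1 := by
  induction m with
  | zero => simp
  | succ m ih =>
    rw [Finset.sum_range_succ, ih, pow_succ]
    have : 1 ≤ 2 ^ m := Nat.one_le_two_pow
    omega

lemma sum_bad_bound (n : ℕ) : (∑ e ∈ Finset.range (n - 2), 2 * 2 ^ (n - e - 3)) < 2 ^ n := by
  rcases Nat.lt_or_ge n 3 with h | h
  · have h2 : n - 2 = 0 := by omega
    simp [h2, Nat.pow_pos, Nat.two_pow_pos]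
  · have hre : ∀ e ∈ Finset.range (n - 2), 2 * 2 ^ (n - e - 3) = 2 * 2 ^ (n - 3 - e) := by
      intro e _
      congr 2
      omega
    rw [Finset.sum_congr rfl hre, ← Finset.mul_sum]
    have hrefl := Finset.sum_range_reflect (fun e => 2 ^ (n - 3 - e)) (n - 2)
    have hcg : ∀ j ∈ Finset.range (n - 2), 2 ^ (n - 3 - (n - 2 - 1 - j)) = 2 ^ j := by
      intro j hj
      rw [Finset.mem_range] at hj
      congr 1
      omega
    rw [← hrefl, Finset.sum_congr rfl hcg, sum_two_pow]
    have h1 : 1 ≤ 2 ^ (n - 2) := Nat.one_le_two_pow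
    have h2 : 2 ^ n = 2 ^ (n - 2) * 4 := by
      conv_lhs => rw [show n = (n - 2) + 2 by omega]
      rw [pow_add]; norm_num
    omega

lemma TJ_level (n : ℕ) : ∃ σ, TJ σ = true ∧ σ.length = n := by
  classical
  set trig : ℕ → Prop := fun e => ∃ m, e + 3 ≤ (Aset e m).card ∧ m ≤ n with htrig
  -- the relevant finite set, per triggered e
  have hDex : ∀ e, trig e → ∃ m, e + 3 ≤ (Aset e m).card := fun e ⟨m, hm, _⟩ => ⟨m, hm⟩
  set me : ℕ → ℕ := fun e => if h : ∃ m, e + 3 ≤ (Aset e m).card then Nat.find h else 0 with hme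
  have hmele : ∀ e, trig e → me e ≤ n := by
    intro e ⟨m, hm, hmn⟩
    have hex : ∃ m, e + 3 ≤ (Aset e m).card := ⟨m, hm⟩
    simp only [hme, dif_pos hex]
    exact le_trans (Nat.find_min' hex hm) hmn
  have hmecard : ∀ e, trig e → e + 3 ≤ (Aset e (me e)).card := by
    intro e he
    have hex := hDex e he
    simp only [hme, dif_pos hex]
    exact Nat.find_spec hex
  have hmemin : ∀ e m, trig e → e + 3 ≤ (Aset e m).card → me e ≤ m := by
    intro e m he hm
    have hex := hDex e he
    simp only [hme, dif_pos hex]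
    exact Nat.find_min' hex hm
  have hDlt : ∀ e, trig e → ∀ x ∈ Aset e (me e), x < n :=
    fun e he x hx => lt_of_lt_of_le (Aset_lt hx) (hmele e he)
  set D : ℕ → Finset (Fin n) := fun e =>
    if h : trig e then (Aset e (me e)).attachFin (hDlt e h) else ∅ with hD
  have hDcard : ∀ e, trig e → e + 3 ≤ (D e).card := by
    intro e he
    simp only [hD, dif_pos he, Finset.card_attachFin]
    exact hmecard e he
  have hDmem : ∀ e, trig e → ∀ i : Fin n, i ∈ D e → (i : ℕ) ∈ Aset e (me e) := by
    intro e he i hi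
    simp only [hD, dif_pos he, Finset.mem_attachFin] at hi
    exact hi
  set Bad : ℕ → Finset (Fin n → Bool) := fun e =>
    Finset.univ.filter fun p => (∀ i ∈ D e, p i = true) ∨ (∀ i ∈ D e, p i = false) with hBad
  have hBadcard : ∀ e, trig e → (Bad e).card ≤ 2 * 2 ^ (n - e - 3) := by
    intro e he
    have hsub : Bad e ⊆ (Finset.univ.filter fun p : Fin n → Bool => ∀ i ∈ D e, p i = true) ∪
        (Finset.univ.filter fun p : Fin n → Bool => ∀ i ∈ D e, p i = false) := by
      intro p hp
      rw [hBad, Finset.mem_filter] at hp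
      rcases hp.2 with h | h
      · exact Finset.mem_union_left _ (Finset.mem_filter.2 ⟨Finset.mem_univ _, h⟩)
      · exact Finset.mem_union_right _ (Finset.mem_filter.2 ⟨Finset.mem_univ _, h⟩)
    have hpow : 2 ^ (n - (D e).card) ≤ 2 ^ (n - e - 3) := by
      apply Nat.pow_le_pow_right (by norm_num)
      have := hDcard e he
      omega
    calc (Bad e).card ≤ _ := Finset.card_le_card hsub
      _ ≤ (Finset.univ.filter fun p : Fin n → Bool => ∀ i ∈ D e, p i = true).card +
          (Finset.univ.filter fun p : Fin n → Bool => ∀ i ∈ D e, p i = false).card :=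
        Finset.card_union_le _ _
      _ ≤ 2 ^ (n - e - 3) + 2 ^ (n - e - 3) := by
          rw [card_constOn, card_constOn]; omega
      _ = 2 * 2 ^ (n - e - 3) := by omega
  set S : Finset ℕ := (Finset.range (n - 2)).filter trig with hS
  have htot : ((S.biUnion Bad).card : ℕ) < 2 ^ n := by
    calc (S.biUnion Bad).card ≤ ∑ e ∈ S, (Bad e).card := Finset.card_biUnion_le
      _ ≤ ∑ e ∈ S, 2 * 2 ^ (n - e - 3) := by
          apply Finset.sum_le_sum
          intro e he
          exact hBadcard e (Finset.mem_filter.1 he).2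
      _ ≤ ∑ e ∈ Finset.range (n - 2), 2 * 2 ^ (n - e - 3) :=
          Finset.sum_le_sum_of_subset (Finset.filter_subset _ _)
      _ < 2 ^ n := sum_bad_bound n
  have hcardu : (Finset.univ : Finset (Fin n → Bool)).card = 2 ^ n := by
    rw [Finset.card_univ, Fintype.card_fun, Fintype.card_bool, Fintype.card_fin]
  have hnsub : ¬ (Finset.univ : Finset (Fin n → Bool)) ⊆ S.biUnion Bad := by
    intro hsub
    have := Finset.card_le_card hsub
    omega
  obtain ⟨p, -, hp⟩ := Finset.not_subset.1 hnsub
  refine ⟨List.ofFn p, ?_, by simp⟩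
  have hgd : ∀ (k : ℕ) (h : k < n), (List.ofFn p).getD k false = p ⟨k, h⟩ := by
    intro k h
    simp [List.getD_eq_getElem?_getD, List.getElem?_ofFn, h]
  rw [TJ_iff]
  simp only [List.length_ofFn]
  intro e he m hm hcard
  have htrige : trig e := ⟨m, hcard, hm⟩
  have hen : e + 3 ≤ n := le_trans hcard (le_trans (Finset.card_le_card (Finset.filter_subset _ _)) (by simpa using hm))
  have heS : e ∈ S := Finset.mem_filter.2 ⟨Finset.mem_range.2 (by omega), htrige⟩
  have hpBad : p ∉ Bad e := fun hb => hp (Finset.mem_biUnion.2 ⟨e, heS, hb⟩)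
  rw [hBad, Finset.mem_filter, not_and_or] at hpBad
  have hpBad2 : ¬ ((∀ i ∈ D e, p i = true) ∨ (∀ i ∈ D e, p i = false)) := by
    rcases hpBad with h | h
    · exact absurd (Finset.mem_univ p) h
    · exact h
  push_neg at hpBad2
  obtain ⟨⟨i, hi, hit⟩, ⟨j, hj, hjf⟩⟩ := hpBad2
  have hsubm : Aset e (me e) ⊆ Aset e m := Aset_mono (hmemin e m htrige hcard)
  refine ⟨i, hsubm (hDmem e htrige i hi), j, hsubm (hDmem e htrige j hj), ?_⟩
  rw [hgd i i.2, hgd j j.2]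
  simp only [Fin.eta]
  simp only [Bool.not_eq_true] at hit
  simp only [Bool.not_eq_false] at hjf
  rw [hit, hjf]
  simp

lemma TJ_clause4 (e : ℕ) : ∃ t, (∃ F : Finset ℕ, ↑F ⊆ WSet e ∧ F.card = e + 3) →
    ∀ σ, TJ σ = true → t < σ.length → ¬ ∃ c : Bool, HomogFor (WSet e) c σ := by
  classical
  by_cases H : ∃ F : Finset ℕ, ↑F ⊆ WSet e ∧ F.card = e + 3
  · obtain ⟨F, hFW, hFcard⟩ := H
    have hxm : ∀ x ∈ F, ∃ m, x ∈ Aset e m := fun x hx => mem_W_exists_Aset (hFW hx)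
    set f : ℕ → ℕ := fun x => if h : ∃ m, x ∈ Aset e m then Nat.find h else 0 with hf
    set M : ℕ := F.sup f with hM
    have hFA : F ⊆ Aset e M := by
      intro x hx
      have hex := hxm x hx
      have h1 : x ∈ Aset e (f x) := by
        simp only [hf, dif_pos hex]
        exact Nat.find_spec hex
      exact Aset_mono (Finset.le_sup hx) h1
    have hcard : e + 3 ≤ (Aset e M).card := hFcard ▸ Finset.card_le_card hFA
    refine ⟨max M e, fun _ σ hσ hlen => ?_⟩
    rintro ⟨c, hc⟩
    have heσ : e < σ.length := lt_of_le_of_lt (le_max_right M e) hlen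
    have hMσ : M ≤ σ.length := le_of_lt (lt_of_le_of_lt (le_max_left M e) hlen)
    obtain ⟨x, hx, y, hy, hxy⟩ := TJ_iff.1 hσ e heσ M hMσ hcard
    have hxW := Aset_sub_W x hx
    have hyW := Aset_sub_W y hy
    have hxlt : x < σ.length := lt_of_lt_of_le (Aset_lt hx) hMσ
    have hylt : y < σ.length := lt_of_lt_of_le (Aset_lt hy) hMσ
    exact hxy ((hc x hxW hxlt).trans (hc y hyW hylt).symm)
  · exact ⟨0, fun h => absurd h H⟩


/-- Jockusch's tree: an infinite computable binary tree `T` such that for each `e`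
there is a bound `t` with: if `W_e` has at least `e + 3` elements then `W_e` is not
homogeneous for any string in `T` of length greater than `t`; in particular no
infinite c.e. set is homogeneous for a path through `T`. -/
theorem stmt14 : ∃ T : List Bool → Bool, Computable T ∧
    IsTree {σ | T σ = true} ∧
    (∀ n, ∃ σ, T σ = true ∧ σ.length = n) ∧
    (∀ e, ∃ t, (∃ F : Finset ℕ, ↑F ⊆ WSet e ∧ F.card = e + 3) →
      ∀ σ, T σ = true → t < σ.length → ¬ ∃ c : Bool, HomogFor (WSet e) c σ) ∧
    (∀ e, (WSet e).Infinite → ¬ ∃ c : Bool, HomogPathC (WSet e) c {σ | T σ = true}) := by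
  refine ⟨TJ, TJ_computable, TJ_tree, TJ_level, TJ_clause4, ?_⟩
  intro e hInf ⟨c, hc⟩
  obtain ⟨F, hFW, hFcard⟩ := hInf.exists_subset_card_eq (e + 3)
  obtain ⟨t, ht⟩ := TJ_clause4 e
  obtain ⟨σ, hσT, hσlen, hσH⟩ := hc (t + 1)
  exact ht ⟨F, hFW, hFcard⟩ σ hσT (by omega) ⟨c, hσH⟩
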